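/- The Coxeter transformations satisfy: θ(S_•) = −S_•, and for all a, b ∈ ℤY one has θ(a / b) = −θ(a) * θ(b) and θ(a * b) = −θ(a) ∖ θ(b), where θ denotes the direct sum of the θ_n acting on ℤY. -/

import Mathlib

/-- A planar binary tree: either the trivial tree (a leaf) or an ordered pair of
planar binary trees. -/
inductive PBT : Type
  | leaf : PBT
  | node : PBT → PBT → PBT
  deriving DecidableEq

namespace PBT

/-- Number of internal vertices of a planar binary tree. -/
def size : PBT → ℕ
  | leaf => 0
  | node a b => a.size + b.size + 1

/-- One covering move of the Tamari order: `Rot x y` holds when `y` is obtained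
from `x` by replacing some subtree of the form `((a,b),c)` by `(a,(b,c))`. -/
inductive Rot : PBT → PBT → Prop
  | rot (a b c : PBT) : Rot (node (node a b) c) (node a (node b c))
  | left {a a' : PBT} (b : PBT) : Rot a a' → Rot (node a b) (node a' b)
  | right (a : PBT) {b b' : PBT} : Rot b b' → Rot (node a b) (node a b')

/-- The Tamari order: reflexive-transitive closure of `Rot`. -/
def tle (x y : PBT) : Prop := Relation.ReflTransGen Rot x y

/-- Grafting of `x` on the leftmost leaf of `y` : the operation `x / y`. -/
def graftOver : PBT → PBT → PBT
  | x, leaf => x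
  | x, node y₁ y₂ => node (graftOver x y₁) y₂

/-- Grafting of `y` on the rightmost leaf of `x` : the operation `x ∖ y`. -/
def under : PBT → PBT → PBT
  | leaf, y => y
  | node x₁ x₂, y => node x₁ (under x₂ y)

theorem Rot.size_eq {x y : PBT} (h : Rot x y) : x.size = y.size := by
  induction h <;> simp [size] <;> omega

theorem tle.size_eq {x y : PBT} (h : tle x y) : x.size = y.size := by
  induction h with
  | refl => rfl
  | tail _ h ih => rw [ih, h.size_eq]

theorem finite_size_le (n : ℕ) : {z : PBT | z.size ≤ n}.Finite := by
  induction n with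
  | zero =>
    apply Set.Finite.subset (Set.finite_singleton leaf)
    rintro (_ | ⟨a, b⟩) hz
    · simp
    · simp [size] at hz
  | succ n ih =>
    apply Set.Finite.subset ((Set.Finite.image2 node ih ih).insert leaf)
    rintro (_ | ⟨a, b⟩) hz
    · simp
    · simp only [Set.mem_setOf_eq, size] at hz
      exact Set.mem_insert_iff.mpr
        (Or.inr (Set.mem_image2.mpr ⟨a, by simp only [Set.mem_setOf_eq]; omega, b, by simp only [Set.mem_setOf_eq]; omega, rfl⟩))

theorem finite_size (n : ℕ) : {z : PBT | z.size = n}.Finite :=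
  (finite_size_le n).subset fun _ hz => le_of_eq hz

theorem finite_tle_right (x : PBT) : {y : PBT | tle y x}.Finite :=
  (finite_size x.size).subset fun _ hy => hy.size_eq

theorem finite_tle_left (x : PBT) : {y : PBT | tle x y}.Finite :=
  (finite_size x.size).subset fun _ hy => hy.size_eq.symm

theorem finite_interval (x y : PBT) :
    {z : PBT | tle (graftOver x y) z ∧ tle z (under x y)}.Finite :=
  (finite_tle_right (under x y)).subset fun _ hz => hz.2

theorem tle.rfl {x : PBT} : tle x x := Relation.ReflTransGen.refl

theorem tle.trans' {x y z : PBT} (h : tle x y) (h' : tle y z) : tle x z :=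
  Relation.ReflTransGen.trans h h'

theorem Rot.tle {x y : PBT} (h : Rot x y) : tle x y := Relation.ReflTransGen.single h

theorem tle_node_left {a a' : PBT} (b : PBT) (h : tle a a') :
    tle (node a b) (node a' b) :=
  Relation.ReflTransGen.lift (fun t => node t b) (fun _ _ h => Rot.left b h) _ _ h

theorem tle_node_right (a : PBT) {b b' : PBT} (h : tle b b') :
    tle (node a b) (node a b') :=
  Relation.ReflTransGen.lift (fun t => node a t) (fun _ _ h => Rot.right a h) _ _ h

theorem tle_node {a a' b b' : PBT} (h : tle a a') (h' : tle b b') :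
    tle (node a b) (node a' b') :=
  (tle_node_left b h).trans' (tle_node_right a' h')

def rank : PBT → ℕ
  | leaf => 0
  | node a b => rank a + rank b + size b

theorem Rot.rank_lt {x y : PBT} (h : Rot x y) : rank x < rank y := by
  induction h with
  | rot a b c => simp [rank, size]; omega
  | left b h ih => simp only [rank]; omega
  | right a h ih => have := h.size_eq; simp only [rank]; omega

theorem tle.rank_le {x y : PBT} (h : tle x y) : rank x ≤ rank y := by
  induction h with
  | refl => exact le_rfl
  | tail _ h ih => exact ih.trans h.rank_lt.le

theorem tle.rank_lt {x y : PBT} (h : tle x y) (hne : x ≠ y) : rank x < rank y := by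
  rcases (Relation.ReflTransGen.cases_tail h) with h' | ⟨c, hc, hcb⟩
  · exact absurd h'.symm hne
  · exact lt_of_le_of_lt (tle.rank_le hc) hcb.rank_lt

theorem tle_antisymm {x y : PBT} (h : tle x y) (h' : tle y x) : x = y := by
  by_contra hne
  exact absurd h'.rank_le (not_le.mpr (h.rank_lt hne))

theorem size_over (x y : PBT) : (graftOver x y).size = x.size + y.size := by
  induction y with
  | leaf => simp [graftOver, size]
  | node y1 y2 ih1 ih2 => simp only [graftOver, size, ih1]; omega

theorem size_under (x y : PBT) : (under x y).size = x.size + y.size := by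
  induction x with
  | leaf => simp [under, size]
  | node x1 x2 ih1 ih2 => simp only [under, size, ih2]; omega

theorem eq_leaf_of_size_eq_zero {x : PBT} (h : x.size = 0) : x = leaf := by
  cases x with
  | leaf => rfl
  | node a b => simp [size] at h

theorem Rot_over_left {u u' : PBT} (v : PBT) (h : Rot u u') :
    Rot (graftOver u v) (graftOver u' v) := by
  induction v with
  | leaf => exact h
  | node v1 v2 ih1 ih2 => exact Rot.left v2 ih1

theorem Rot_over_right (u : PBT) {v v' : PBT} (h : Rot v v') :
    Rot (graftOver u v) (graftOver u v') := by
  induction h with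
  | rot a b c => exact Rot.rot (graftOver u a) b c
  | left b h ih => exact Rot.left b ih
  | right a h ih => exact Rot.right (graftOver u a) h

theorem Rot_under_left {u u' : PBT} (v : PBT) (h : Rot u u') :
    Rot (under u v) (under u' v) := by
  induction h with
  | rot a b c => exact Rot.rot a b (under c v)
  | left b h ih => exact Rot.left (under b v) h
  | right a h ih => exact Rot.right a ih

theorem Rot_under_right (u : PBT) {v v' : PBT} (h : Rot v v') :
    Rot (under u v) (under u v') := by
  induction u with
  | leaf => exact h
  | node u1 u2 ih1 ih2 => exact Rot.right u1 ih2

theorem tle_over_mono {u u' v v' : PBT} (h : tle u u') (h' : tle v v') :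
    tle (graftOver u v) (graftOver u' v') :=
  Relation.ReflTransGen.trans (Relation.ReflTransGen.lift (fun t => graftOver t v) (fun _ _ h => Rot_over_left v h) _ _ h)
    (Relation.ReflTransGen.lift (fun t => graftOver u' t) (fun _ _ h => Rot_over_right u' h) _ _ h')

theorem tle_under_mono {u u' v v' : PBT} (h : tle u u') (h' : tle v v') :
    tle (under u v) (under u' v') :=
  Relation.ReflTransGen.trans (Relation.ReflTransGen.lift (fun t => under t v) (fun _ _ h => Rot_under_left v h) _ _ h)
    (Relation.ReflTransGen.lift (fun t => under u' t) (fun _ _ h => Rot_under_right u' h) _ _ h')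

theorem tle_node_under (a b c : PBT) : tle (node (under a b) c) (under a (node b c)) := by
  induction a generalizing b c with
  | leaf => exact tle.rfl
  | node a1 a2 ih1 ih2 =>
      exact ((Rot.rot a1 (under a2 b) c).tle).trans' (tle_node_right a1 (ih2 b c))

theorem tle_over_node (a b c : PBT) : tle (graftOver (node a b) c) (node a (graftOver b c)) := by
  induction c generalizing a b with
  | leaf => exact tle.rfl
  | node c1 c2 ih1 ih2 =>
      exact (tle_node_left c2 (ih1 a b)).trans' (Rot.rot a (graftOver b c1) c2).tle



def split : PBT → ℕ → PBT × PBT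
  | leaf, _ => (leaf, leaf)
  | node a b, m =>
    if m ≤ a.size then ((split a m).1, node (split a m).2 b)
    else (node a (split b (m - a.size - 1)).1, (split b (m - a.size - 1)).2)

theorem split_size_self (z : PBT) : split z z.size = (z, leaf) := by
  induction z with
  | leaf => rfl
  | node a b ih1 ih2 =>
      have h : ¬ (node a b).size ≤ a.size := by simp only [size]; omega
      rw [split, if_neg h]
      have : (node a b).size - a.size - 1 = b.size := by simp only [size]; omega
      rw [this, ih2]

theorem split_zero (z : PBT) : split z 0 = (leaf, z) := by
  induction z with
  | leaf => rfl
  | node a b ih1 ih2 =>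
      rw [split, if_pos (Nat.zero_le _), ih1]

theorem split_over (u v : PBT) : split (graftOver u v) u.size = (u, v) := by
  induction v with
  | leaf => exact split_size_self u
  | node v1 v2 ih1 ih2 =>
      show split (node (graftOver u v1) v2) u.size = _
      have h : u.size ≤ (graftOver u v1).size := by rw [size_over]; omega
      rw [split, if_pos h, ih1]

theorem split_under (u v : PBT) : split (under u v) u.size = (u, v) := by
  induction u with
  | leaf => exact split_zero v
  | node u1 u2 ih1 ih2 =>
      show split (node u1 (under u2 v)) (node u1 u2).size = _
      have h : ¬ (node u1 u2).size ≤ u1.size := by simp only [size]; omega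
      rw [split, if_neg h]
      have : (node u1 u2).size - u1.size - 1 = u2.size := by simp only [size]; omega
      rw [this, ih2]

theorem split_spec (z : PBT) (m : ℕ) :
    tle (graftOver (split z m).1 (split z m).2) z ∧ tle z (under (split z m).1 (split z m).2) := by
  induction z generalizing m with
  | leaf => exact ⟨tle.rfl, tle.rfl⟩
  | node a b ih1 ih2 =>
      by_cases h : m ≤ a.size
      · rw [split, if_pos h]
        obtain ⟨h1, h2⟩ := ih1 m
        constructor
        · show tle (node (graftOver (split a m).1 (split a m).2) b) (node a b)
          exact tle_node_left b h1
        · exact (tle_node_left b h2).trans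
            (tle_node_under (split a m).1 (split a m).2 b)
      · rw [split, if_neg h]
        obtain ⟨h1, h2⟩ := ih2 (m - a.size - 1)
        constructor
        · exact (tle_over_node a (split b (m - a.size - 1)).1
            (split b (m - a.size - 1)).2).trans (tle_node_right a h1)
        · show tle (node a b) (node a (under (split b (m - a.size - 1)).1
            (split b (m - a.size - 1)).2))
          exact tle_node_right a h2

theorem rot_split_mono {z z' : PBT} (h : Rot z z') (m : ℕ) :
    tle (split z m).1 (split z' m).1 ∧ tle (split z m).2 (split z' m).2 := by
  induction h generalizing m with
  | rot a b c =>
      by_cases h1 : m ≤ a.size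
      · have h2 : m ≤ (node a b).size := by simp [size]; omega
        rw [split, if_pos h2, split, if_pos h1, split, if_pos h1]
        exact ⟨tle.rfl, (Rot.rot (split a m).2 b c).tle⟩
      · by_cases h2 : m ≤ (node a b).size
        · have h3 : m - a.size - 1 ≤ b.size := by simp [size] at h2 ⊢; omega
          rw [split, if_pos h2, split, if_neg h1, split, if_neg h1]
          have e : m - (node a b).size - 1 = m - a.size - 1 - b.size - 1 := by
            simp [size]; omega
          rw [split, if_pos h3]
          exact ⟨tle.rfl, tle.rfl⟩
        · have h3 : ¬ m - a.size - 1 ≤ b.size := by simp [size] at h2 ⊢; omega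
          rw [split, if_neg h2, split, if_neg h1, split, if_neg h3]
          have e : m - (node a b).size - 1 = m - a.size - 1 - b.size - 1 := by
            simp [size]; omega
          rw [e]
          exact ⟨(Rot.rot a b (split c (m - a.size - 1 - b.size - 1)).1).tle, tle.rfl⟩
  | @left a a' b h ih =>
      have hs : a'.size = a.size := h.size_eq.symm
      by_cases h1 : m ≤ a.size
      · rw [split, if_pos h1, split, hs, if_pos h1]
        exact ⟨(ih m).1, tle_node_left b (ih m).2⟩
      · rw [split, if_neg h1, split, hs, if_neg h1]
        exact ⟨tle_node_left _ h.tle, tle.rfl⟩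
  | @right a b b' h ih =>
      by_cases h1 : m ≤ a.size
      · rw [split, if_pos h1, split, if_pos h1]
        exact ⟨tle.rfl, tle_node_right _ h.tle⟩
      · rw [split, if_neg h1, split, if_neg h1]
        exact ⟨tle_node_right a (ih _).1, (ih _).2⟩

theorem tle_split_mono {z z' : PBT} (h : tle z z') (m : ℕ) :
    tle (split z m).1 (split z' m).1 ∧ tle (split z m).2 (split z' m).2 := by
  induction h with
  | refl => exact ⟨tle.rfl, tle.rfl⟩
  | tail _ h ih =>
      exact ⟨ih.1.trans (rot_split_mono h m).1, ih.2.trans (rot_split_mono h m).2⟩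

theorem rot_over_inv {z u v : PBT} (h : Rot z (graftOver u v)) :
    (∃ u₀, Rot u₀ u ∧ z = graftOver u₀ v) ∨ (∃ v₀, Rot v₀ v ∧ z = graftOver u v₀) := by
  induction v generalizing z u with
  | leaf => exact Or.inl ⟨z, h, rfl⟩
  | node v1 v2 ih1 ih2 =>
      rw [show graftOver u (node v1 v2) = node (graftOver u v1) v2 from rfl] at h
      cases h with
      | rot a b c =>
          exact Or.inr ⟨node (node v1 b) c, Rot.rot v1 b c, rfl⟩
      | left b h' =>
          rcases ih1 h' with ⟨u₀, hr, rfl⟩ | ⟨v₀, hr, rfl⟩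
          · exact Or.inl ⟨u₀, hr, rfl⟩
          · exact Or.inr ⟨node v₀ v2, Rot.left v2 hr, rfl⟩
      | right a h' =>
          exact Or.inr ⟨node v1 _, Rot.right v1 h', rfl⟩

theorem rot_under_inv {z u v : PBT} (h : Rot (under u v) z) :
    (∃ u', Rot u u' ∧ z = under u' v) ∨ (∃ v', Rot v v' ∧ z = under u v') := by
  induction u generalizing z v with
  | leaf => exact Or.inr ⟨z, h, rfl⟩
  | node u1 u2 ih1 ih2 =>
      rw [show under (node u1 u2) v = node u1 (under u2 v) from rfl] at h
      cases h with
      | rot a b =>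
          exact Or.inl ⟨node a (node b u2), Rot.rot a b u2, rfl⟩
      | left b h' =>
          exact Or.inl ⟨node _ u2, Rot.left u2 h', rfl⟩
      | right a h' =>
          rcases ih2 h' with ⟨u', hr, rfl⟩ | ⟨v', hr, rfl⟩
          · exact Or.inl ⟨node u1 u', Rot.right u1 hr, rfl⟩
          · exact Or.inr ⟨v', hr, rfl⟩

theorem exists_factor_of_tle_over {z x y : PBT} (h : tle z (graftOver x y)) :
    ∃ u v, z = graftOver u v ∧ tle u x ∧ tle v y := by
  have key : ∀ w, tle z w → ∀ x y, w = graftOver x y →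
      ∃ u v, z = graftOver u v ∧ tle u x ∧ tle v y := by
    intro w hw
    induction hw with
    | refl => exact fun x y hz => ⟨x, y, hz, tle.rfl, tle.rfl⟩
    | @tail c w hzc hcw ih =>
        rintro x y rfl
        rcases rot_over_inv hcw with ⟨u₀, hr, rfl⟩ | ⟨v₀, hr, rfl⟩
        · obtain ⟨u, v, rfl, hu, hv⟩ := ih u₀ y rfl
          exact ⟨u, v, rfl, hu.trans hr.tle, hv⟩
        · obtain ⟨u, v, rfl, hu, hv⟩ := ih x v₀ rfl
          exact ⟨u, v, rfl, hu, hv.trans hr.tle⟩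
  exact key _ h x y rfl

theorem exists_factor_of_under_tle {z x y : PBT} (h : tle (under x y) z) :
    ∃ u v, z = under u v ∧ tle x u ∧ tle y v := by
  have key : ∀ w, tle w z → ∀ x y, w = under x y →
      ∃ u v, z = under u v ∧ tle x u ∧ tle y v := by
    intro w hw
    induction hw using Relation.ReflTransGen.head_induction_on with
    | refl => exact fun x y hz => ⟨x, y, hz.symm ▸ rfl, tle.rfl, tle.rfl⟩
    | @head w c hwc hcz ih =>
        rintro x y rfl
        rcases rot_under_inv hwc with ⟨u', hr, rfl⟩ | ⟨v', hr, rfl⟩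
        · obtain ⟨u, v, rfl, hu, hv⟩ := ih u' y rfl
          exact ⟨u, v, rfl, hr.tle.trans hu, hv⟩
        · obtain ⟨u, v, rfl, hu, hv⟩ := ih x v' rfl
          exact ⟨u, v, rfl, hu, hr.tle.trans hv⟩
  exact key _ h x y rfl

end PBT

/-- The free abelian group `ℤY = ⊕ₙ ℤYₙ` on the set of all planar binary trees. -/
abbrev ZY : Type := PBT →₀ ℤ

namespace PBT

/-- The basis element `S_x` of `ℤY`. -/
noncomputable def S (x : PBT) : ZY := Finsupp.single x 1

/-- The class `P_x = ∑_{y ≤ x} S_y` of the projective module. -/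
noncomputable def P (x : PBT) : ZY := ∑ y ∈ (finite_tle_right x).toFinset, S y

/-- The class `I_x = ∑_{y ≥ x} S_y` of the injective module. -/
noncomputable def I (x : PBT) : ZY := ∑ y ∈ (finite_tle_left x).toFinset, S y

/-- The Loday-Ronco product on basis elements:
`S_x * S_y = ∑_{x/y ≤ z ≤ x∖y} S_z`. -/
noncomputable def starB (x y : PBT) : ZY := ∑ z ∈ (finite_interval x y).toFinset, S z

/-- Bilinear extension of a product defined on basis elements. -/
noncomputable def bilin (f : PBT → PBT → ZY) (a b : ZY) : ZY :=
  a.sum fun x ax => b.sum fun y byy => (ax * byy) • f x y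

/-- The product `/` on `ℤY`, with `S_x / S_y = S_{x/y}`. -/
noncomputable def overM : ZY → ZY → ZY := bilin fun x y => S (x.graftOver y)

/-- The product `∖` on `ℤY`, with `S_x ∖ S_y = S_{x∖y}`. -/
noncomputable def underM : ZY → ZY → ZY := bilin fun x y => S (x.under y)

/-- The Loday-Ronco product `*` on `ℤY`. -/
noncomputable def starM : ZY → ZY → ZY := bilin starB

/-- The unique planar binary tree `•` with one internal vertex. -/
def dot : PBT := node leaf leaf

-- new algebra lemmas

theorem bilin_zero_left (f : PBT → PBT → ZY) (b : ZY) : bilin f 0 b = 0 :=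
  Finsupp.sum_zero_index

theorem bilin_zero_right (f : PBT → PBT → ZY) (a : ZY) : bilin f a 0 = 0 := by
  unfold bilin
  simp

theorem bilin_add_left (f : PBT → PBT → ZY) (a a' b : ZY) :
    bilin f (a + a') b = bilin f a b + bilin f a' b := by
  unfold bilin
  refine Finsupp.sum_add_index' (fun x => ?_) (fun x c c' => ?_)
  · simp
  · rw [← Finsupp.sum_add]
    exact Finsupp.sum_congr fun y _ => by rw [add_mul, add_smul]

theorem bilin_add_right (f : PBT → PBT → ZY) (a b b' : ZY) :
    bilin f a (b + b') = bilin f a b + bilin f a b' := by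
  unfold bilin
  rw [← Finsupp.sum_add]
  refine Finsupp.sum_congr fun x _ => ?_
  refine Finsupp.sum_add_index' (fun y => ?_) (fun y c c' => ?_)
  · rw [mul_zero, zero_smul]
  · rw [mul_add, add_smul]

theorem bilin_neg_left (f : PBT → PBT → ZY) (a b : ZY) :
    bilin f (-a) b = - bilin f a b := by
  unfold bilin
  rw [Finsupp.sum_neg_index (fun x => by simp)]
  rw [← Finsupp.sum_neg]
  refine Finsupp.sum_congr fun x _ => ?_
  rw [← Finsupp.sum_neg]
  exact Finsupp.sum_congr fun y _ => by rw [neg_mul, neg_smul]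

theorem bilin_neg_right (f : PBT → PBT → ZY) (a b : ZY) :
    bilin f a (-b) = - bilin f a b := by
  unfold bilin
  rw [← Finsupp.sum_neg]
  refine Finsupp.sum_congr fun x _ => ?_
  rw [Finsupp.sum_neg_index (fun y => by rw [mul_zero, zero_smul])]
  rw [← Finsupp.sum_neg]
  exact Finsupp.sum_congr fun y _ => by rw [mul_neg, neg_smul]

theorem bilin_S (f : PBT → PBT → ZY) (x y : PBT) : bilin f (S x) (S y) = f x y := by
  unfold bilin S
  rw [Finsupp.sum_single_index (by simp), Finsupp.sum_single_index (by rw [mul_zero, zero_smul])]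
  rw [one_mul, one_smul]

theorem bilin_S_sum (f : PBT → PBT → ZY) (x : PBT) (B : Finset PBT) :
    bilin f (S x) (∑ v ∈ B, S v) = ∑ v ∈ B, f x v := by
  classical
  induction B using Finset.induction_on with
  | empty => simp [bilin_zero_right]
  | insert _ _ hB ihB =>
      rename_i v B'
      rw [Finset.sum_insert hB, bilin_add_right, ihB, Finset.sum_insert hB, bilin_S]

theorem bilin_sum_S (f : PBT → PBT → ZY) (A B : Finset PBT) :
    bilin f (∑ u ∈ A, S u) (∑ v ∈ B, S v) = ∑ u ∈ A, ∑ v ∈ B, f u v := by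
  classical
  induction A using Finset.induction_on with
  | empty => simp [bilin_zero_left]
  | insert _ _ hA ih =>
      rename_i u A'
      rw [Finset.sum_insert hA, bilin_add_left, ih, Finset.sum_insert hA, bilin_S_sum]


theorem E1 (x y : PBT) : overM (P x) (P y) = P (graftOver x y) := by
  unfold overM P
  rw [bilin_sum_S, ← Finset.sum_product']
  refine Finset.sum_nbij' (fun p => graftOver p.1 p.2) (fun z => split z x.size)
    ?_ ?_ ?_ ?_ ?_
  · rintro ⟨u, v⟩ hp
    simp only [Finset.mem_product, Set.Finite.mem_toFinset, Set.mem_setOf_eq] at hp ⊢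
    exact tle_over_mono hp.1 hp.2
  · intro z hz
    simp only [Set.Finite.mem_toFinset, Set.mem_setOf_eq] at hz
    obtain ⟨u, v, rfl, hu, hv⟩ := exists_factor_of_tle_over hz
    simp only [Finset.mem_product, Set.Finite.mem_toFinset, Set.mem_setOf_eq]
    rw [← hu.size_eq, split_over]
    exact ⟨hu, hv⟩
  · rintro ⟨u, v⟩ hp
    simp only [Finset.mem_product, Set.Finite.mem_toFinset, Set.mem_setOf_eq] at hp
    show split (graftOver u v) x.size = (u, v)
    rw [← hp.1.size_eq, split_over]
  · intro z hz
    simp only [Set.Finite.mem_toFinset, Set.mem_setOf_eq] at hz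
    obtain ⟨u, v, rfl, hu, hv⟩ := exists_factor_of_tle_over hz
    show graftOver (split (graftOver u v) x.size).1 (split (graftOver u v) x.size).2 = graftOver u v
    rw [← hu.size_eq, split_over]
  · intro p _
    rfl

theorem E4 (x y : PBT) : underM (I x) (I y) = I (under x y) := by
  unfold underM I
  rw [bilin_sum_S, ← Finset.sum_product']
  refine Finset.sum_nbij' (fun p => under p.1 p.2) (fun z => split z x.size)
    ?_ ?_ ?_ ?_ ?_
  · rintro ⟨u, v⟩ hp
    simp only [Finset.mem_product, Set.Finite.mem_toFinset, Set.mem_setOf_eq] at hp ⊢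
    exact tle_under_mono hp.1 hp.2
  · intro z hz
    simp only [Set.Finite.mem_toFinset, Set.mem_setOf_eq] at hz
    obtain ⟨u, v, rfl, hu, hv⟩ := exists_factor_of_under_tle hz
    simp only [Finset.mem_product, Set.Finite.mem_toFinset, Set.mem_setOf_eq]
    rw [← hu.size_eq.symm, split_under]
    exact ⟨hu, hv⟩
  · rintro ⟨u, v⟩ hp
    simp only [Finset.mem_product, Set.Finite.mem_toFinset, Set.mem_setOf_eq] at hp
    show split (under u v) x.size = (u, v)
    rw [hp.1.size_eq, split_under]
  · intro z hz
    simp only [Set.Finite.mem_toFinset, Set.mem_setOf_eq] at hz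
    obtain ⟨u, v, rfl, hu, hv⟩ := exists_factor_of_under_tle hz
    show under (split (under u v) x.size).1 (split (under u v) x.size).2 = under u v
    rw [hu.size_eq, split_under]
  · intro p _
    rfl

theorem E2 (x y : PBT) : starM (P x) (P y) = P (under x y) := by
  unfold starM P
  rw [bilin_sum_S, ← Finset.sum_product']
  simp only [starB]
  rw [Finset.sum_sigma']
  refine Finset.sum_nbij' (fun q => q.2) (fun z => ⟨split z x.size, z⟩)
    ?_ ?_ ?_ ?_ ?_
  · rintro ⟨⟨u, v⟩, z⟩ hq
    simp only [Finset.mem_sigma, Finset.mem_product, Set.Finite.mem_toFinset,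
      Set.mem_setOf_eq] at hq ⊢
    exact hq.2.2.trans (tle_under_mono hq.1.1 hq.1.2)
  · intro z hz
    simp only [Set.Finite.mem_toFinset, Set.mem_setOf_eq] at hz
    have hm := tle_split_mono hz x.size
    rw [split_under] at hm
    have hs := split_spec z x.size
    simp only [Finset.mem_sigma, Finset.mem_product, Set.Finite.mem_toFinset,
      Set.mem_setOf_eq]
    exact ⟨⟨hm.1, hm.2⟩, hs.1, hs.2⟩
  · rintro ⟨⟨u, v⟩, z⟩ hq
    simp only [Finset.mem_sigma, Finset.mem_product, Set.Finite.mem_toFinset,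
      Set.mem_setOf_eq] at hq
    obtain ⟨⟨hu, hv⟩, h1, h2⟩ := hq
    have hsz : u.size = x.size := hu.size_eq
    have e1 := tle_split_mono h1 u.size
    rw [split_over] at e1
    have e2 := tle_split_mono h2 u.size
    rw [split_under] at e2
    have he : split z u.size = (u, v) :=
      Prod.ext (tle_antisymm e2.1 e1.1) (tle_antisymm e2.2 e1.2)
    show (⟨split z x.size, z⟩ : (_ : PBT × PBT) × PBT) = ⟨(u, v), z⟩
    rw [← hsz, he]
  · intro z hz
    rfl
  · intro q hq
    rfl

theorem E3 (x y : PBT) : starM (I x) (I y) = I (graftOver x y) := by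
  unfold starM I
  rw [bilin_sum_S, ← Finset.sum_product']
  simp only [starB]
  rw [Finset.sum_sigma']
  refine Finset.sum_nbij' (fun q => q.2) (fun z => ⟨split z x.size, z⟩)
    ?_ ?_ ?_ ?_ ?_
  · rintro ⟨⟨u, v⟩, z⟩ hq
    simp only [Finset.mem_sigma, Finset.mem_product, Set.Finite.mem_toFinset,
      Set.mem_setOf_eq] at hq ⊢
    exact (tle_over_mono hq.1.1 hq.1.2).trans hq.2.1
  · intro z hz
    simp only [Set.Finite.mem_toFinset, Set.mem_setOf_eq] at hz
    have hm := tle_split_mono hz x.size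
    rw [split_over] at hm
    have hs := split_spec z x.size
    simp only [Finset.mem_sigma, Finset.mem_product, Set.Finite.mem_toFinset,
      Set.mem_setOf_eq]
    exact ⟨⟨hm.1, hm.2⟩, hs.1, hs.2⟩
  · rintro ⟨⟨u, v⟩, z⟩ hq
    simp only [Finset.mem_sigma, Finset.mem_product, Set.Finite.mem_toFinset,
      Set.mem_setOf_eq] at hq
    obtain ⟨⟨hu, hv⟩, h1, h2⟩ := hq
    have hsz : u.size = x.size := hu.size_eq.symm
    have e1 := tle_split_mono h1 u.size
    rw [split_over] at e1
    have e2 := tle_split_mono h2 u.size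
    rw [split_under] at e2
    have he : split z u.size = (u, v) :=
      Prod.ext (tle_antisymm e2.1 e1.1) (tle_antisymm e2.2 e1.2)
    show (⟨split z x.size, z⟩ : (_ : PBT × PBT) × PBT) = ⟨(u, v), z⟩
    rw [← hsz, he]
  · intro z hz
    rfl
  · intro q hq
    rfl

theorem eq_dot_of_size_one {z : PBT} (h : z.size = 1) : z = dot := by
  cases z with
  | leaf => simp [size] at h
  | node a b =>
      simp only [size] at h
      have ha : a.size = 0 := by omega
      have hb : b.size = 0 := by omega
      rw [eq_leaf_of_size_eq_zero ha, eq_leaf_of_size_eq_zero hb]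
      rfl

theorem P_dot : P dot = S dot := by
  have : (finite_tle_right dot).toFinset = {dot} := by
    ext z
    simp only [Set.Finite.mem_toFinset, Set.mem_setOf_eq, Finset.mem_singleton]
    constructor
    · intro h
      exact eq_dot_of_size_one h.size_eq
    · rintro rfl
      exact tle.rfl
  rw [P, this, Finset.sum_singleton]

theorem I_dot : I dot = S dot := by
  have : (finite_tle_left dot).toFinset = {dot} := by
    ext z
    simp only [Set.Finite.mem_toFinset, Set.mem_setOf_eq, Finset.mem_singleton]
    constructor
    · intro h
      exact (eq_dot_of_size_one h.size_eq.symm)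
    · rintro rfl
      exact tle.rfl
  rw [I, this, Finset.sum_singleton]

theorem S_mem_closure (x : PBT) : S x ∈ AddSubgroup.closure (Set.range P) := by
  suffices H : ∀ n (x : PBT), rank x ≤ n → S x ∈ AddSubgroup.closure (Set.range P) from
    H (rank x) x le_rfl
  intro n
  induction n using Nat.strong_induction_on with
  | _ n ih =>
    intro x hx
    have hxT : x ∈ (finite_tle_right x).toFinset := by
      simp only [Set.Finite.mem_toFinset, Set.mem_setOf_eq]
      exact tle.rfl
    have hP : S x = P x - ∑ y ∈ (finite_tle_right x).toFinset.erase x, S y := by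
      rw [P, ← Finset.add_sum_erase _ S hxT]
      abel
    rw [hP]
    refine sub_mem (AddSubgroup.subset_closure ⟨x, rfl⟩) (AddSubgroup.sum_mem _ fun y hy => ?_)
    simp only [Finset.mem_erase, Set.Finite.mem_toFinset, Set.mem_setOf_eq] at hy
    have hlt : rank y < rank x := tle.rank_lt hy.2 hy.1
    exact ih (rank y) (lt_of_lt_of_le hlt hx) y le_rfl

theorem mem_closure_P (a : ZY) : a ∈ AddSubgroup.closure (Set.range P) := by
  induction a using Finsupp.induction with
  | zero => exact zero_mem _
  | single_add x c g hx hc ih =>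
      refine add_mem ?_ ih
      have : Finsupp.single x c = c • S x := by
        rw [S, Finsupp.smul_single, smul_eq_mul, mul_one]
      rw [this]
      exact zsmul_mem (S_mem_closure x) c

theorem theta_bilin (θ : ZY →+ ZY) (f g : PBT → PBT → ZY)
    (hP : ∀ x y : PBT, θ (bilin f (P x) (P y)) = - bilin g (θ (P x)) (θ (P y))) :
    ∀ a b : ZY, θ (bilin f a b) = - bilin g (θ a) (θ b) := by
  intro a b
  have ha := mem_closure_P a
  have hb := mem_closure_P b
  induction ha, hb using AddSubgroup.closure_induction₂ with
  | mem x y hx hy =>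
      obtain ⟨x', rfl⟩ := hx
      obtain ⟨y', rfl⟩ := hy
      exact hP x' y'
  | zero_left x hx => simp only [bilin_zero_left, map_zero, neg_zero]
  | zero_right x hx => simp only [bilin_zero_right, map_zero, neg_zero]
  | add_left x y z hx hy hz h1 h2 =>
      rw [bilin_add_left, map_add, map_add, bilin_add_left, h1, h2, neg_add]
  | add_right y z x hy hz hx h1 h2 =>
      rw [bilin_add_right, map_add, map_add, bilin_add_right, h1, h2, neg_add]
  | neg_left x y hx hy h =>
      rw [bilin_neg_left, map_neg, map_neg, bilin_neg_left, h]
  | neg_right x y hx hy h =>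
      rw [bilin_neg_right, map_neg, map_neg, bilin_neg_right, h]

end PBT

open PBT in
/-- The Coxeter transformation `θ` (the unique additive map with `θ(P_x) = -I_x`)
satisfies `θ(S_•) = -S_•`, `θ(a / b) = -θ(a) * θ(b)` and `θ(a * b) = -θ(a) ∖ θ(b)`. -/
theorem coxeter_transformation_products (θ : ZY →+ ZY)
    (hθ : ∀ x : PBT, θ (P x) = - I x) :
    θ (S dot) = - S dot ∧
    (∀ a b : ZY, θ (overM a b) = - starM (θ a) (θ b)) ∧
    (∀ a b : ZY, θ (starM a b) = - underM (θ a) (θ b)) := by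
  refine ⟨?_, ?_, ?_⟩
  · calc θ (S dot) = θ (P dot) := by rw [P_dot]
      _ = - I dot := hθ dot
      _ = - S dot := by rw [I_dot]
  · have := theta_bilin θ (fun x y => S (x.graftOver y)) starB (fun x y => by
      show θ (overM (P x) (P y)) = - starM (θ (P x)) (θ (P y))
      rw [E1, hθ, hθ, hθ]
      show -I (graftOver x y) = - starM (-I x) (-I y)
      unfold starM
      rw [bilin_neg_left, bilin_neg_right, neg_neg]
      show -I (graftOver x y) = - starM (I x) (I y)
      rw [E3])
    exact this
  · have := theta_bilin θ starB (fun x y => S (x.under y)) (fun x y => by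
      show θ (starM (P x) (P y)) = - underM (θ (P x)) (θ (P y))
      rw [E2, hθ, hθ, hθ]
      show -I (under x y) = - underM (-I x) (-I y)
      unfold underM
      rw [bilin_neg_left, bilin_neg_right, neg_neg]
      show -I (under x y) = - underM (I x) (I y)
      rw [E4])
    exact this
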